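/- If f : X → ℝ ∪ {+∞} is a proper convex function on a finite-dimensional real Hilbert space X that is strongly convex with parameter α > 0, then its convex conjugate f* is differentiable everywhere and its gradient ∇f* is Lipschitz continuous with constant 1/α. -/

import Mathlib

open RealInnerProductSpace

/-- `p` is a subgradient of `f` at `x`. -/
def SubgradientAt {X : Type*} [NormedAddCommGroup X] [InnerProductSpace ℝ X]
    (f : X → ℝ) (p x : X) : Prop :=
  ∀ z, f z ≥ f x + ⟪p, z - x⟫

/-- `f` is strongly convex with parameter `α` (via the subgradient inequality). -/
def StronglyConvex {X : Type*} [NormedAddCommGroup X] [InnerProductSpace ℝ X]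
    (f : X → ℝ) (α : ℝ) : Prop :=
  ∀ x₁ x₂ p, SubgradientAt f p x₁ →
    f x₂ ≥ f x₁ + ⟪p, x₂ - x₁⟫ + α / 2 * ‖x₂ - x₁‖ ^ 2

/-- The convex conjugate of `f`. -/
noncomputable def conj {X : Type*} [NormedAddCommGroup X] [InnerProductSpace ℝ X]
    (f : X → ℝ) (y : X) : ℝ :=
  ⨆ x, (⟪x, y⟫ - f x)

/-- A finite convex function on a finite-dimensional space has a subgradient at `0`. -/
lemma exists_subgradient_zero {X : Type*} [NormedAddCommGroup X] [InnerProductSpace ℝ X]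
    [FiniteDimensional ℝ X] (f : X → ℝ) (hconv : ConvexOn ℝ Set.univ f) :
    ∃ p, SubgradientAt f p 0 := by
  have : CompleteSpace X := FiniteDimensional.complete ℝ X
  have hcont : Continuous f := by
    exact continuousOn_univ.mp (hconv.continuousOn isOpen_univ)
  set S : Set (X × ℝ) := {q | f q.1 < q.2} with hS
  have hSopen : IsOpen S := isOpen_lt (hcont.comp continuous_fst) continuous_snd
  have hSconv : Convex ℝ S := by
    rintro ⟨x₁, t₁⟩ h1 ⟨x₂, t₂⟩ h2 a b ha hb hab
    simp only [hS, Set.mem_setOf_eq] at h1 h2 ⊢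
    have hcv := hconv.2 (Set.mem_univ x₁) (Set.mem_univ x₂) ha hb hab
    simp only [smul_eq_mul] at hcv
    have hmem : (a • (x₁, t₁) + b • (x₂, t₂)) = (a • x₁ + b • x₂, a * t₁ + b * t₂) := by
      simp [Prod.ext_iff, smul_eq_mul]
    rw [hmem]
    have hab' : 0 < a ∨ 0 < b := by
      by_contra h
      push_neg at h
      have : a = 0 := le_antisymm h.1 ha
      have : b = 0 := le_antisymm h.2 hb
      simp_all
    have hlt : a * f x₁ + b * f x₂ < a * t₁ + b * t₂ := by
      rcases hab' with h | h
      · nlinarith [mul_le_mul_of_nonneg_left h2.le hb]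
      · nlinarith [mul_le_mul_of_nonneg_left h1.le ha]
    calc f (a • x₁ + b • x₂) ≤ a * f x₁ + b * f x₂ := hcv
      _ < a * t₁ + b * t₂ := hlt
  have hnot : ((0 : X), f 0) ∉ S := by simp [hS]
  obtain ⟨φ, hφ⟩ := geometric_hahn_banach_open_point hSconv hSopen hnot
  set c : ℝ := φ (0, 1) with hcdef
  have hrep : ∀ (x : X) (t : ℝ), φ (x, t) = φ (x, 0) + t * c := by
    intro x t
    have he : ((x, t) : X × ℝ) = (x, (0 : ℝ)) + t • ((0 : X), (1 : ℝ)) := by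
      simp [Prod.ext_iff]
    rw [he, map_add, map_smul, smul_eq_mul]
  have hc : c < 0 := by
    have h1 := hφ ((0 : X), f 0 + 1) (by simp [hS])
    rw [hrep (0 : X) (f 0 + 1), hrep (0 : X) (f 0)] at h1
    nlinarith [h1]
  have hcpos : 0 < -c := by linarith
  have key : ∀ x, φ (x, 0) + f x * c ≤ φ ((0 : X), 0) + f 0 * c := by
    intro x
    by_contra h
    push_neg at h
    set δ := φ (x, 0) + f x * c - (φ ((0 : X), 0) + f 0 * c) with hδ
    have hδpos : 0 < δ := by linarith
    have hεpos : 0 < δ / (2 * (-c)) := by positivity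
    have h2 := hφ (x, f x + δ / (2 * (-c))) (by simp only [hS, Set.mem_setOf_eq]; linarith [hεpos])
    rw [hrep x (f x + δ / (2 * (-c))), hrep (0 : X) (f 0)] at h2
    have hmul : (f x + δ / (2 * (-c))) * c = f x * c - δ / 2 := by
      have hc0 : c ≠ 0 := ne_of_lt hc
      field_simp
      ring
    rw [hmul] at h2
    linarith
  set L : X →L[ℝ] ℝ := φ.comp (ContinuousLinearMap.inl ℝ X ℝ) with hL
  set q : X := (InnerProductSpace.toDual ℝ X).symm L with hq
  have hqx : ∀ x : X, ⟪q, x⟫ = φ (x, 0) := by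
    intro x
    rw [hq, InnerProductSpace.toDual_symm_apply]
    simp [hL]
  refine ⟨(-c)⁻¹ • q, ?_⟩
  intro z
  have hk := key z
  have h0 : φ ((0 : X), 0) = 0 := by
    have : ((0 : X), (0 : ℝ)) = (0 : X × ℝ) := rfl
    rw [this, map_zero]
  rw [h0, zero_add] at hk
  have hz0 : z - 0 = z := sub_zero z
  rw [hz0, real_inner_smul_left, hqx]
  have h1 : (-c)⁻¹ * φ (z, 0) ≤ f z - f 0 := by
    rw [inv_mul_le_iff₀ hcpos]
    nlinarith [hk]
  linarith

theorem stmt0 {X : Type*} [NormedAddCommGroup X] [InnerProductSpace ℝ X]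
    [FiniteDimensional ℝ X] (f : X → ℝ) (α : ℝ) (hα : 0 < α)
    (hconv : ConvexOn ℝ Set.univ f) (hsc : StronglyConvex f α) :
    ∃ f' : X → X, (∀ y, HasGradientAt (conj f) (f' y) y) ∧
      LipschitzWith (Real.toNNReal (1 / α)) f' := by
  obtain ⟨p₀, hp₀⟩ := exists_subgradient_zero f hconv
  have hcont : Continuous f := by
    exact continuousOn_univ.mp (hconv.continuousOn isOpen_univ)
  have hlow : ∀ z : X, f 0 + ⟪p₀, z⟫ + α / 2 * ‖z‖ ^ 2 ≤ f z := by
    intro z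
    have := hsc 0 z p₀ hp₀
    simpa using this
  -- existence of maximizer
  have hmaxex : ∀ y : X, ∃ m, ∀ z, ⟪z, y⟫ - f z ≤ ⟪m, y⟫ - f m := by
    intro y
    set R : ℝ := 2 * ‖y - p₀‖ / α + 1 with hRdef
    have hR : 0 < R := by positivity
    have hg : Continuous fun z : X => ⟪z, y⟫ - f z :=
      (continuous_id.inner continuous_const).sub hcont
    obtain ⟨m, hmK, hm⟩ := (isCompact_closedBall (0 : X) R).exists_isMaxOn
      ⟨0, by simp [hR.le]⟩ hg.continuousOn
    refine ⟨m, fun z => ?_⟩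
    by_cases hz : z ∈ Metric.closedBall (0 : X) R
    · exact hm hz
    · have hz' : R < ‖z‖ := by
        simp only [Metric.mem_closedBall, dist_zero_right, not_le] at hz
        exact hz
      have hzpos : 0 < ‖z‖ := lt_trans hR hz'
      have h0m : ⟪(0 : X), y⟫ - f 0 ≤ ⟪m, y⟫ - f m := hm (by simp [hR.le])
      rw [inner_zero_left] at h0m
      have hb : ⟪z, y⟫ - f z ≤ ‖z‖ * ‖y - p₀‖ - α / 2 * ‖z‖ ^ 2 - f 0 := by
        have h1 := hlow z
        have h2 : ⟪z, y - p₀⟫ = ⟪z, y⟫ - ⟪p₀, z⟫ := by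
          rw [inner_sub_right, real_inner_comm z p₀]
        have h3 : ⟪z, y - p₀⟫ ≤ ‖z‖ * ‖y - p₀‖ := real_inner_le_norm _ _
        linarith
      have hneg : ‖z‖ * ‖y - p₀‖ - α / 2 * ‖z‖ ^ 2 < 0 := by
        have h4 : ‖y - p₀‖ < α / 2 * ‖z‖ := by
          rw [hRdef] at hz'
          have hB : 2 * ‖y - p₀‖ / α < ‖z‖ := by linarith
          have hm2 := mul_lt_mul_of_pos_left hB (by positivity : (0:ℝ) < α / 2)
          calc ‖y - p₀‖ = α / 2 * (2 * ‖y - p₀‖ / α) := by field_simp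
            _ < α / 2 * ‖z‖ := hm2
        nlinarith [mul_lt_mul_of_pos_left h4 hzpos]
      linarith
  choose x hx using hmaxex
  have hval : ∀ y, conj f y = ⟪x y, y⟫ - f (x y) := by
    intro y
    have hbdd : BddAbove (Set.range fun z : X => ⟪z, y⟫ - f z) := by
      refine ⟨⟪x y, y⟫ - f (x y), ?_⟩
      rintro r ⟨z, rfl⟩
      exact hx y z
    exact le_antisymm (ciSup_le (hx y)) (le_ciSup hbdd (x y))
  have hsub : ∀ y, SubgradientAt f y (x y) := by
    intro y z
    have h1 := hx y z
    have h2 : ⟪y, z - x y⟫ = ⟪z, y⟫ - ⟪x y, y⟫ := by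
      rw [real_inner_comm, inner_sub_left]
    linarith
  have hstr : ∀ y z, f (x y) + ⟪y, z - x y⟫ + α / 2 * ‖z - x y‖ ^ 2 ≤ f z :=
    fun y z => hsc (x y) z y (hsub y)
  have hlip : ∀ y₁ y₂, ‖x y₁ - x y₂‖ ≤ 1 / α * ‖y₁ - y₂‖ := by
    intro y₁ y₂
    have h1 := hstr y₁ (x y₂)
    have h2 := hstr y₂ (x y₁)
    have e1 : ⟪y₁ - y₂, x y₁ - x y₂⟫ = ⟪y₁, x y₁ - x y₂⟫ - ⟪y₂, x y₁ - x y₂⟫ :=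
      inner_sub_left _ _ _
    have e2 : ⟪y₁, x y₂ - x y₁⟫ = -⟪y₁, x y₁ - x y₂⟫ := by
      rw [show x y₂ - x y₁ = -(x y₁ - x y₂) from by abel, inner_neg_right]
    have e3 : ‖x y₂ - x y₁‖ ^ 2 = ‖x y₁ - x y₂‖ ^ 2 := by rw [norm_sub_rev]
    rw [e2, e3] at h1
    have hmono : α * ‖x y₁ - x y₂‖ ^ 2 ≤ ⟪y₁ - y₂, x y₁ - x y₂⟫ := by linarith
    have hcs : ⟪y₁ - y₂, x y₁ - x y₂⟫ ≤ ‖y₁ - y₂‖ * ‖x y₁ - x y₂‖ :=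
      real_inner_le_norm _ _
    rcases eq_or_lt_of_le (norm_nonneg (x y₁ - x y₂)) with h | h
    · rw [← h]; positivity
    · have h4 : α * ‖x y₁ - x y₂‖ ≤ ‖y₁ - y₂‖ := by nlinarith
      calc ‖x y₁ - x y₂‖ = 1 / α * (α * ‖x y₁ - x y₂‖) := by field_simp
        _ ≤ 1 / α * ‖y₁ - y₂‖ := by
            apply mul_le_mul_of_nonneg_left h4 (by positivity)
  refine ⟨x, fun y => ?_, ?_⟩
  · rw [hasGradientAt_iff_isLittleO, Asymptotics.isLittleO_iff]
    intro ε hε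
    have hnb : ∀ᶠ y' in nhds y, ‖y' - y‖ ≤ ε * α := by
      have hmem : Metric.closedBall y (ε * α) ∈ nhds y :=
        Metric.closedBall_mem_nhds y (by positivity)
      filter_upwards [hmem] with y' hy'
      rwa [Metric.mem_closedBall, dist_eq_norm] at hy'
    filter_upwards [hnb] with y' hy'
    have hlo : 0 ≤ conj f y' - conj f y - ⟪x y, y' - y⟫ := by
      have h1 : ⟪x y, y'⟫ - f (x y) ≤ ⟪x y', y'⟫ - f (x y') := hx y' (x y)
      have e : ⟪x y, y' - y⟫ = ⟪x y, y'⟫ - ⟪x y, y⟫ := inner_sub_right _ _ _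
      have hv := hval y
      have hv' := hval y'
      linarith
    have hhi : conj f y' - conj f y - ⟪x y, y' - y⟫ ≤ 1 / α * ‖y' - y‖ ^ 2 := by
      have h1 : ⟪x y', y⟫ - f (x y') ≤ ⟪x y, y⟫ - f (x y) := hx y (x y')
      have e1 : ⟪x y', y' - y⟫ = ⟪x y', y'⟫ - ⟪x y', y⟫ := inner_sub_right _ _ _
      have e2 : ⟪x y' - x y, y' - y⟫ = ⟪x y', y' - y⟫ - ⟪x y, y' - y⟫ :=
        inner_sub_left _ _ _
      have hcs : ⟪x y' - x y, y' - y⟫ ≤ ‖x y' - x y‖ * ‖y' - y‖ :=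
        real_inner_le_norm _ _
      have hl : ‖x y' - x y‖ * ‖y' - y‖ ≤ 1 / α * ‖y' - y‖ * ‖y' - y‖ :=
        mul_le_mul_of_nonneg_right (hlip y' y) (norm_nonneg _)
      have esq : 1 / α * ‖y' - y‖ ^ 2 = 1 / α * ‖y' - y‖ * ‖y' - y‖ := by ring
      have hv := hval y
      have hv' := hval y'
      linarith
    rw [Real.norm_eq_abs, abs_of_nonneg hlo]
    have h5 : ‖y' - y‖ * ‖y' - y‖ ≤ (ε * α) * ‖y' - y‖ :=
      mul_le_mul_of_nonneg_right hy' (norm_nonneg _)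
    have h6 : 1 / α * (‖y' - y‖ * ‖y' - y‖) ≤ 1 / α * ((ε * α) * ‖y' - y‖) :=
      mul_le_mul_of_nonneg_left h5 (by positivity)
    have h7 : 1 / α * ((ε * α) * ‖y' - y‖) = ε * ‖y' - y‖ := by
      field_simp
    calc conj f y' - conj f y - ⟪x y, y' - y⟫ ≤ 1 / α * ‖y' - y‖ ^ 2 := hhi
      _ = 1 / α * (‖y' - y‖ * ‖y' - y‖) := by ring
      _ ≤ 1 / α * ((ε * α) * ‖y' - y‖) := h6
      _ = ε * ‖y' - y‖ := h7
  · apply LipschitzWith.of_dist_le_mul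
    intro y₁ y₂
    rw [dist_eq_norm, dist_eq_norm, Real.coe_toNNReal _ (by positivity)]
    exact hlip y₁ y₂
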